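/- Let m > 0 and r ≥ 0, and define g : ℝ → ℝ by g(x) := e^{−r √(x²+m²)} / √(x²+m²). Then there exists a constant C_m > 0, depending only on m (and in particular independent of r), such that ‖∂_x^k g‖_{L^∞(ℝ)} ≤ C_m for each k ∈ {0,1,2}. -/

import Mathlib

open MeasureTheory Real

private lemma exp_facts (t : ℝ) (ht : 0 ≤ t) :
    Real.exp (-t) ≤ 1 ∧ t * Real.exp (-t) ≤ 1 ∧ t ^ 2 * Real.exp (-t) ≤ 4 := by
  have hE0 : 0 < Real.exp (-t) := Real.exp_pos _
  have hmul : Real.exp (-t) * Real.exp t = 1 := by rw [← Real.exp_add]; simp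
  have hexp : t + 1 ≤ Real.exp t := Real.add_one_le_exp t
  refine ⟨?_, ?_, ?_⟩
  · nlinarith [mul_le_mul_of_nonneg_left hexp hE0.le, mul_nonneg hE0.le ht]
  · nlinarith [mul_le_mul_of_nonneg_left hexp hE0.le, hE0]
  · have hhalf : t / 2 + 1 ≤ Real.exp (t / 2) := Real.add_one_le_exp _
    have hsq : Real.exp (t / 2) * Real.exp (t / 2) = Real.exp t := by
      rw [← Real.exp_add]; ring_nf
    have h4 : t ^ 2 ≤ 4 * Real.exp t := by
      nlinarith [mul_le_mul hhalf hhalf (by linarith) (Real.exp_pos (t / 2)).le, ht]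
    nlinarith [mul_le_mul_of_nonneg_right h4 hE0.le, hmul]

private lemma aux_bound0 (m S E : ℝ) (hm : 0 < m) (hS0 : 0 < S) (hmS : m ≤ S)
    (hE0 : 0 < E) (hE1 : E ≤ 1) :
    |E / S| ≤ 12 / m + 12 / m ^ 2 + 12 / m ^ 3 := by
  have hb : |E / S| ≤ 1 / m := by
    rw [abs_of_pos (by positivity), div_le_div_iff₀ hS0 hm]
    nlinarith
  have hc : (1 : ℝ) / m ≤ 12 / m := by
    rw [div_le_div_iff₀ hm hm]; nlinarith
  nlinarith [hb, hc, (by positivity : (0:ℝ) < 12 / m ^ 2),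
    (by positivity : (0:ℝ) < 12 / m ^ 3)]

private lemma aux_bound1 (m S E r x : ℝ) (hm : 0 < m) (hS0 : 0 < S) (hmS : m ≤ S)
    (hE0 : 0 < E) (hE1 : E ≤ 1) (h1 : r * S * E ≤ 1) (hr : 0 ≤ r) (hxS : |x| ≤ S) :
    |-(E * (x * (r * S + 1))) / S ^ 3| ≤ 12 / m + 12 / m ^ 2 + 12 / m ^ 3 := by
  have hxm : |x| * m ^ 2 ≤ S ^ 3 := by
    have hm2 : m ^ 2 ≤ S ^ 2 := by nlinarith
    nlinarith [mul_le_mul hxS hm2 (by positivity) hS0.le]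
  have hb : |-(E * (x * (r * S + 1))) / S ^ 3| ≤ 2 / m ^ 2 := by
    rw [abs_div, abs_neg, abs_mul, abs_of_pos hE0, abs_mul,
      abs_of_nonneg (by positivity : (0:ℝ) ≤ r * S + 1),
      abs_of_pos (pow_pos hS0 3), div_le_div_iff₀ (pow_pos hS0 3) (by positivity)]
    nlinarith [mul_le_mul_of_nonneg_right h1 (mul_nonneg (abs_nonneg x) (sq_nonneg m)),
      mul_le_mul_of_nonneg_right hE1 (mul_nonneg (abs_nonneg x) (sq_nonneg m)),
      hxm, hS0, hE0, abs_nonneg x]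
  have hc : (2 : ℝ) / m ^ 2 ≤ 12 / m ^ 2 := by
    rw [div_le_div_iff₀ (by positivity) (by positivity)]; nlinarith
  nlinarith [hb, hc, (by positivity : (0:ℝ) < 12 / m),
    (by positivity : (0:ℝ) < 12 / m ^ 3)]

private lemma aux_bound2 (m S E r x : ℝ) (hm : 0 < m) (hS0 : 0 < S) (hmS : m ≤ S)
    (hE0 : 0 < E) (hE1 : E ≤ 1) (h1 : r * S * E ≤ 1) (h2 : (r * S) ^ 2 * E ≤ 4)
    (hr : 0 ≤ r) (hx2 : x ^ 2 ≤ S ^ 2) :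
    |E * (r ^ 2 * x ^ 2 * S ^ 2 + 3 * r * x ^ 2 * S + 3 * x ^ 2 - r * S ^ 3 - S ^ 2) / S ^ 5|
      ≤ 12 / m + 12 / m ^ 2 + 12 / m ^ 3 := by
  set P : ℝ := r ^ 2 * x ^ 2 * S ^ 2 + 3 * r * x ^ 2 * S + 3 * x ^ 2 - r * S ^ 3 - S ^ 2
    with hPdef
  have hup : E * P ≤ 10 * S ^ 2 := by
    nlinarith [mul_le_mul_of_nonneg_right h2 (sq_nonneg S),
      mul_le_mul_of_nonneg_right h1 (sq_nonneg S),
      mul_le_mul_of_nonneg_right hE1 (sq_nonneg S),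
      mul_le_mul_of_nonneg_left hx2 (by positivity : (0:ℝ) ≤ E * r ^ 2 * S ^ 2),
      mul_le_mul_of_nonneg_left hx2 (by positivity : (0:ℝ) ≤ E * r * S),
      mul_le_mul_of_nonneg_left hx2 hE0.le,
      mul_nonneg (mul_nonneg hE0.le hr) (pow_nonneg hS0.le 3),
      mul_nonneg hE0.le (sq_nonneg S)]
  have hlo : -(10 * S ^ 2) ≤ E * P := by
    nlinarith [mul_le_mul_of_nonneg_right h1 (sq_nonneg S),
      mul_le_mul_of_nonneg_right hE1 (sq_nonneg S),
      mul_nonneg (mul_nonneg (mul_nonneg hE0.le (sq_nonneg r)) (sq_nonneg x)) (sq_nonneg S),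
      mul_nonneg (mul_nonneg (mul_nonneg hE0.le hr) (sq_nonneg x)) hS0.le,
      mul_nonneg hE0.le (sq_nonneg x)]
  have hm3 : m ^ 3 ≤ S ^ 3 := pow_le_pow_left₀ hm.le hmS 3
  have hb : |E * P / S ^ 5| ≤ 12 / m ^ 3 := by
    rw [abs_div, abs_of_pos (pow_pos hS0 5),
      div_le_div_iff₀ (pow_pos hS0 5) (by positivity)]
    rcases abs_cases (E * P) with ⟨hcase, _⟩ | ⟨hcase, _⟩ <;> rw [hcase]
    · nlinarith [mul_le_mul_of_nonneg_right hup (by positivity : (0:ℝ) ≤ m ^ 3),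
        mul_le_mul_of_nonneg_left hm3 (by positivity : (0:ℝ) ≤ 10 * S ^ 2),
        pow_pos hS0 5]
    · nlinarith [mul_le_mul_of_nonneg_right (neg_le_neg hlo) (by positivity : (0:ℝ) ≤ m ^ 3),
        mul_le_mul_of_nonneg_left hm3 (by positivity : (0:ℝ) ≤ 10 * S ^ 2),
        pow_pos hS0 5]
  nlinarith [hb, (by positivity : (0:ℝ) < 12 / m),
    (by positivity : (0:ℝ) < 12 / m ^ 2)]

/-- Lemma 5.1: for `m > 0` and `r ≥ 0`, the function
`g(x) = e^{−r√(x²+m²)}/√(x²+m²)` satisfies `‖∂_x^k g‖_{L^∞} ≤ C_m` for `k = 0,1,2`,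
with `C_m` depending only on `m` (independent of `r`). -/
theorem sech_type_kernel_derivative_bound (m : ℝ) (hm : 0 < m) :
    ∃ C : ℝ, 0 < C ∧
      ∀ (r : ℝ), 0 ≤ r → ∀ k : ℕ, k ≤ 2 → ∀ x : ℝ,
        |iteratedDeriv k
            (fun y : ℝ => Real.exp (-r * Real.sqrt (y ^ 2 + m ^ 2))
              / Real.sqrt (y ^ 2 + m ^ 2)) x| ≤ C := by
  refine ⟨12/m + 12/m^2 + 12/m^3, by positivity, ?_⟩
  intro r hr k hk x
  have hspos : ∀ y : ℝ, 0 < Real.sqrt (y ^ 2 + m ^ 2) :=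
    fun y => Real.sqrt_pos.2 (by positivity)
  have hsne : ∀ y : ℝ, Real.sqrt (y ^ 2 + m ^ 2) ≠ 0 := fun y => (hspos y).ne'
  have hms : ∀ y : ℝ, m ≤ Real.sqrt (y ^ 2 + m ^ 2) :=
    fun y => (Real.le_sqrt' hm).2 (by nlinarith [sq_nonneg y])
  have hys : ∀ y : ℝ, |y| ≤ Real.sqrt (y ^ 2 + m ^ 2) := fun y => by
    rw [← Real.sqrt_sq_eq_abs]
    exact Real.sqrt_le_sqrt (by nlinarith [sq_nonneg m])
  have hds : ∀ y : ℝ, HasDerivAt (fun z : ℝ => Real.sqrt (z ^ 2 + m ^ 2))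
      (y / Real.sqrt (y ^ 2 + m ^ 2)) y := fun y => by
    have h1 : HasDerivAt (fun z : ℝ => z ^ 2 + m ^ 2) (2 * y) y := by
      simpa using (hasDerivAt_pow 2 y).add_const (m ^ 2)
    have h2 := h1.sqrt (by positivity)
    convert h2 using 1
    have hu0 : Real.sqrt (y ^ 2 + m ^ 2) ≠ 0 := hsne y
    set u : ℝ := Real.sqrt (y ^ 2 + m ^ 2) with hu
    field_simp
  have hE : ∀ y : ℝ, HasDerivAt (fun z : ℝ => Real.exp (-r * Real.sqrt (z ^ 2 + m ^ 2)))
      (Real.exp (-r * Real.sqrt (y ^ 2 + m ^ 2)) * (-r * (y / Real.sqrt (y ^ 2 + m ^ 2)))) y :=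
    fun y => ((hds y).const_mul (-r)).exp
  have hg : ∀ y : ℝ, HasDerivAt
      (fun z : ℝ => Real.exp (-r * Real.sqrt (z ^ 2 + m ^ 2)) / Real.sqrt (z ^ 2 + m ^ 2))
      (-(Real.exp (-r * Real.sqrt (y ^ 2 + m ^ 2)) *
          (y * (r * Real.sqrt (y ^ 2 + m ^ 2) + 1))) / (Real.sqrt (y ^ 2 + m ^ 2)) ^ 3) y :=
    fun y => by
    have h := (hE y).fun_div (hds y) (hsne y)
    refine h.congr_deriv ?_
    have hu0 : Real.sqrt (y ^ 2 + m ^ 2) ≠ 0 := hsne y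
    set u : ℝ := Real.sqrt (y ^ 2 + m ^ 2) with hu
    field_simp
    ring
  have hg1 : ∀ y : ℝ, HasDerivAt
      (fun z : ℝ => -(Real.exp (-r * Real.sqrt (z ^ 2 + m ^ 2)) *
          (z * (r * Real.sqrt (z ^ 2 + m ^ 2) + 1))) / (Real.sqrt (z ^ 2 + m ^ 2)) ^ 3)
      (Real.exp (-r * Real.sqrt (y ^ 2 + m ^ 2)) *
          (r ^ 2 * y ^ 2 * (Real.sqrt (y ^ 2 + m ^ 2)) ^ 2 +
            3 * r * y ^ 2 * Real.sqrt (y ^ 2 + m ^ 2) + 3 * y ^ 2 -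
            r * (Real.sqrt (y ^ 2 + m ^ 2)) ^ 3 - (Real.sqrt (y ^ 2 + m ^ 2)) ^ 2) /
          (Real.sqrt (y ^ 2 + m ^ 2)) ^ 5) y := fun y => by
    have hnum : HasDerivAt
        (fun z : ℝ => -(Real.exp (-r * Real.sqrt (z ^ 2 + m ^ 2)) *
          (z * (r * Real.sqrt (z ^ 2 + m ^ 2) + 1))))
        (-((Real.exp (-r * Real.sqrt (y ^ 2 + m ^ 2)) * (-r * (y / Real.sqrt (y ^ 2 + m ^ 2)))) *
            (y * (r * Real.sqrt (y ^ 2 + m ^ 2) + 1)) +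
          Real.exp (-r * Real.sqrt (y ^ 2 + m ^ 2)) *
            (1 * (r * Real.sqrt (y ^ 2 + m ^ 2) + 1) +
              y * (r * (y / Real.sqrt (y ^ 2 + m ^ 2)))))) y :=
      ((hE y).mul ((hasDerivAt_id y).mul (((hds y).const_mul r).add_const 1))).neg
    have hden : HasDerivAt (fun z : ℝ => (Real.sqrt (z ^ 2 + m ^ 2)) ^ 3)
        ((3 : ℕ) * (Real.sqrt (y ^ 2 + m ^ 2)) ^ 2 * (y / Real.sqrt (y ^ 2 + m ^ 2))) y := by
      simpa using (hds y).fun_pow 3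
    have h := hnum.fun_div hden (pow_ne_zero 3 (hsne y))
    refine h.congr_deriv ?_
    have hu0 : Real.sqrt (y ^ 2 + m ^ 2) ≠ 0 := hsne y
    set u : ℝ := Real.sqrt (y ^ 2 + m ^ 2) with hu
    field_simp
    ring
  -- facts at the point x
  have hS0 : 0 < Real.sqrt (x ^ 2 + m ^ 2) := hspos x
  have hmS : m ≤ Real.sqrt (x ^ 2 + m ^ 2) := hms x
  have hxS : |x| ≤ Real.sqrt (x ^ 2 + m ^ 2) := hys x
  have hx2 : x ^ 2 ≤ (Real.sqrt (x ^ 2 + m ^ 2)) ^ 2 := by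
    nlinarith [hxS, abs_nonneg x, sq_abs x]
  obtain ⟨hE1, h1, h2⟩ := exp_facts (r * Real.sqrt (x ^ 2 + m ^ 2))
    (mul_nonneg hr hS0.le)
  rw [← neg_mul] at hE1 h1 h2
  have hE0 : 0 < Real.exp (-r * Real.sqrt (x ^ 2 + m ^ 2)) := Real.exp_pos _
  interval_cases k
  · simp only [iteratedDeriv_zero]
    exact aux_bound0 m _ _ hm hS0 hmS hE0 hE1
  · rw [iteratedDeriv_one, (hg x).deriv]
    exact aux_bound1 m _ _ r x hm hS0 hmS hE0 hE1 h1 hr hxS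
  · rw [iteratedDeriv_succ, iteratedDeriv_one]
    have hder : deriv (fun y : ℝ =>
        Real.exp (-r * Real.sqrt (y ^ 2 + m ^ 2)) / Real.sqrt (y ^ 2 + m ^ 2)) =
        fun y : ℝ => -(Real.exp (-r * Real.sqrt (y ^ 2 + m ^ 2)) *
          (y * (r * Real.sqrt (y ^ 2 + m ^ 2) + 1))) / (Real.sqrt (y ^ 2 + m ^ 2)) ^ 3 :=
      funext fun y => (hg y).deriv
    rw [hder, (hg1 x).deriv]
    exact aux_bound2 m _ _ r x hm hS0 hmS hE0 hE1 h1 h2 hr hx2
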